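/- Fix a positive integer d. For all positive integers f, the sum C(d,f) := Σ_{ek = f} (d·e·μ(k))/φ(d·e) equals d·μ(f)²/φ(d·f) if gcd(d,f) = 1, and equals 0 if gcd(d,f) > 1. -/

import Mathlib

open scoped ArithmeticFunction ArithmeticFunction.Moebius
open Finset

lemma ratio_eq (n : ℕ) (hn : 0 < n) :
    (n : ℚ) / (n.totient : ℚ) = ∏ p ∈ n.primeFactors, (p : ℚ) / ((p : ℚ) - 1) := by
  have key := Nat.totient_mul_prod_primeFactors n
  have hφ : (0 : ℚ) < (n.totient : ℚ) := by exact_mod_cast Nat.totient_pos.mpr hn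
  have hprod : ∀ p ∈ n.primeFactors, ((p : ℚ) - 1) ≠ 0 := by
    intro p hp
    have h2 := (Nat.prime_of_mem_primeFactors hp).two_le
    have : (2 : ℚ) ≤ (p : ℚ) := by exact_mod_cast h2
    linarith
  have hkey : (n.totient : ℚ) * ∏ p ∈ n.primeFactors, (p : ℚ)
      = (n : ℚ) * ∏ p ∈ n.primeFactors, ((p : ℚ) - 1) := by
    have := congrArg (fun x : ℕ => (x : ℚ)) key
    push_cast at this
    rw [this]
    congr 1
    refine Finset.prod_congr rfl fun p hp => ?_
    have h1 : 1 ≤ p := (Nat.prime_of_mem_primeFactors hp).one_lt.le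
    push_cast [Nat.cast_sub h1]
    ring
  rw [Finset.prod_div_distrib]
  rw [div_eq_div_iff hφ.ne' (Finset.prod_ne_zero_iff.mpr hprod)]
  linarith [hkey]

noncomputable def Gar (d : ℕ) : ArithmeticFunction ℚ :=
  ⟨fun n => if n = 0 then 0 else ∏ p ∈ n.primeFactors \ d.primeFactors, (p : ℚ) / ((p : ℚ) - 1),
    if_pos rfl⟩

lemma Gar_apply {d n : ℕ} (hn : n ≠ 0) :
    Gar d n = ∏ p ∈ n.primeFactors \ d.primeFactors, (p : ℚ) / ((p : ℚ) - 1) := if_neg hn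

lemma Gar_mult (d : ℕ) : (Gar d).IsMultiplicative := by
  rw [ArithmeticFunction.IsMultiplicative.iff_ne_zero]
  constructor
  · rw [Gar_apply one_ne_zero]; simp
  · intro m n hm hn hmn
    rw [Gar_apply (Nat.mul_ne_zero hm hn), Gar_apply hm, Gar_apply hn,
      Nat.primeFactors_mul hm hn, Finset.union_sdiff_distrib]
    exact Finset.prod_union ((Nat.Coprime.disjoint_primeFactors hmn).mono
      Finset.sdiff_subset Finset.sdiff_subset)

lemma keyA {d : ℕ} (hd : 0 < d) {n : ℕ} (hn : 0 < n) :
    (d : ℚ) * n / ((d * n).totient : ℚ) = ((d : ℚ) / (d.totient : ℚ)) * Gar d n := by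
  have h1 : ((d * n : ℕ) : ℚ) / (((d * n)).totient : ℚ)
      = ∏ p ∈ (d * n).primeFactors, (p : ℚ) / ((p : ℚ) - 1) :=
    ratio_eq _ (Nat.mul_pos hd hn)
  have h2 : (d * n).primeFactors = d.primeFactors ∪ (n.primeFactors \ d.primeFactors) := by
    rw [Nat.primeFactors_mul hd.ne' hn.ne', Finset.union_sdiff_self_eq_union]
  rw [Gar_apply hn.ne', ratio_eq d hd]
  push_cast at h1
  rw [h1, h2, Finset.prod_union Finset.disjoint_sdiff]

lemma Gar_prime_pow {d : ℕ} (hd : 0 < d) {p k : ℕ} (hp : p.Prime) (hk : k ≠ 0) :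
    Gar d (p ^ k) = if p ∣ d then 1 else (p : ℚ) / ((p : ℚ) - 1) := by
  rw [Gar_apply (pow_ne_zero _ hp.pos.ne'), Nat.primeFactors_prime_pow hk hp]
  by_cases hpd : p ∣ d
  · have : p ∈ d.primeFactors := Nat.mem_primeFactors.mpr ⟨hp, hpd, hd.ne'⟩
    rw [if_pos hpd, Finset.sdiff_eq_empty_iff_subset.mpr (by simpa), Finset.prod_empty]
  · have : p ∉ d.primeFactors := fun h => hpd (Nat.dvd_of_mem_primeFactors h)
    rw [if_neg hpd, Finset.sdiff_eq_self_of_disjoint (by simpa), Finset.prod_singleton]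

noncomputable def Har (d : ℕ) : ArithmeticFunction ℚ := Gar d * (↑(μ) : ArithmeticFunction ℚ)

lemma Har_mult (d : ℕ) : (Har d).IsMultiplicative :=
  (Gar_mult d).mul ArithmeticFunction.isMultiplicative_moebius.intCast

lemma Har_prime_pow {d : ℕ} (hd : 0 < d) {p k : ℕ} (hp : p.Prime) (hk : k ≠ 0) :
    Har d (p ^ k) = if k = 1 ∧ ¬ p ∣ d then 1 / ((p : ℚ) - 1) else 0 := by
  have hsum : Har d (p ^ k) = ∑ i ∈ range (k + 1), Gar d (p ^ i) * (μ (p ^ k / p ^ i) : ℚ) := by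
    rw [Har, ArithmeticFunction.mul_apply]
    simp only [ArithmeticFunction.intCoe_apply]
    rw [Nat.sum_divisorsAntidiagonal (fun a b => Gar d a * ((μ b : ℤ) : ℚ)),
      Nat.sum_divisors_prime_pow hp]
  rcases (Nat.one_le_iff_ne_zero.mpr hk).eq_or_lt with h1 | h2
  · -- k = 1
    subst h1
    rw [hsum, Finset.sum_range_succ, Finset.sum_range_one]
    have hG := Gar_prime_pow hd hp one_ne_zero
    rw [pow_one] at hG
    simp only [pow_zero, pow_one, Nat.div_self hp.pos, Nat.div_one, (Gar_mult d).map_one,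
      ArithmeticFunction.moebius_apply_prime hp, ArithmeticFunction.moebius_apply_one, hG]
    by_cases hpd : p ∣ d
    · simp [hpd]
    · have h2 : (2 : ℚ) ≤ (p : ℚ) := by exact_mod_cast hp.two_le
      simp only [hpd, not_false_eq_true, and_self, if_true, if_false, true_and, if_neg hpd]
      have h3 : (p : ℚ) - 1 ≠ 0 := by linarith
      field_simp
      push_cast
      ring
  · -- k ≥ 2
    rw [hsum, show k + 1 = (k - 1) + 1 + 1 from by omega, Finset.sum_range_succ,
      Finset.sum_range_succ]
    have hz : ∀ i ∈ range (k - 1), Gar d (p ^ i) * (μ (p ^ k / p ^ i) : ℚ) = 0 := by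
      intro i hi
      rw [Finset.mem_range] at hi
      rw [Nat.pow_div (by omega) hp.pos, ArithmeticFunction.moebius_apply_prime_pow hp
        (by omega), if_neg (by omega)]
      simp
    rw [Finset.sum_eq_zero hz, show (k - 1) + 1 = k from by omega,
      Nat.pow_div (by omega : k - 1 ≤ k) hp.pos, Nat.pow_div le_rfl hp.pos, Nat.sub_self,
      pow_zero, ArithmeticFunction.moebius_apply_one, show k - (k - 1) = 1 from by omega,
      pow_one, ArithmeticFunction.moebius_apply_prime hp,
      Gar_prime_pow hd hp (by omega : k - 1 ≠ 0), Gar_prime_pow hd hp hk,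
      if_neg (show ¬(k = 1 ∧ ¬p ∣ d) by rintro ⟨h, -⟩; omega)]
    by_cases hpd : p ∣ d <;> simp only [hpd, if_true, if_false] <;> push_cast <;> ring

/-- `C(d,f) = Σ_{ek=f} d·e·μ(k)/φ(d·e)` equals `d·μ(f)²/φ(d·f)` when `gcd(d,f)=1`
and `0` otherwise. -/
theorem stmt_8 (d f : ℕ) (hd : 0 < d) (hf : 0 < f) :
    (∑ e ∈ f.divisors, ((d : ℚ) * e * (μ (f / e) : ℚ)) / ((d * e).totient : ℚ)) =
      if Nat.gcd d f = 1 then (d : ℚ) * (μ f : ℚ) ^ 2 / ((d * f).totient : ℚ) else 0 := by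
  have hHar : Har d f = ∑ e ∈ f.divisors, Gar d e * ((μ (f / e) : ℤ) : ℚ) := by
    rw [Har, ArithmeticFunction.mul_apply]
    simp only [ArithmeticFunction.intCoe_apply]
    exact Nat.sum_divisorsAntidiagonal (fun a b => Gar d a * ((μ b : ℤ) : ℚ))
  have hL : (∑ e ∈ f.divisors, ((d : ℚ) * e * (μ (f / e) : ℚ)) / ((d * e).totient : ℚ))
      = ((d : ℚ) / (d.totient : ℚ)) * Har d f := by
    rw [hHar, Finset.mul_sum]
    refine Finset.sum_congr rfl fun e he => ?_
    have he0 : 0 < e := Nat.pos_of_mem_divisors he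
    rw [mul_div_right_comm, keyA hd he0, mul_assoc]
  rw [hL]
  by_cases hco : Nat.gcd d f = 1
  · rw [if_pos hco]
    by_cases hsq : Squarefree f
    · have hHf : Har d f = ∏ p ∈ f.primeFactors, 1 / ((p : ℚ) - 1) := by
        rw [(Har_mult d).multiplicative_factorization _ hf.ne', Finsupp.prod,
          Nat.support_factorization]
        refine Finset.prod_congr rfl fun p hp => ?_
        have hpp := Nat.prime_of_mem_primeFactors hp
        have hk1 : f.factorization p = 1 := by
          have h1 : 0 < f.factorization p :=
            hpp.factorization_pos_of_dvd hf.ne' (Nat.dvd_of_mem_primeFactors hp)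
          have h2 := (Nat.squarefree_iff_factorization_le_one hf.ne').mp hsq p
          omega
        have hnd : ¬p ∣ d := by
          intro hpd
          have : p ∣ Nat.gcd d f := Nat.dvd_gcd hpd (Nat.dvd_of_mem_primeFactors hp)
          rw [hco, Nat.dvd_one] at this
          exact hpp.one_lt.ne' this
        rw [hk1, Har_prime_pow hd hpp one_ne_zero, if_pos ⟨rfl, hnd⟩]
      have hμ : ((μ f : ℤ) : ℚ) ^ 2 = 1 := by
        have := ArithmeticFunction.moebius_sq_eq_one_of_squarefree hsq
        exact_mod_cast congrArg (fun x : ℤ => (x : ℚ)) this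
      have hφf : (f.totient : ℚ) = ∏ p ∈ f.primeFactors, ((p : ℚ) - 1) := by
        have key := Nat.totient_mul_prod_primeFactors f
        rw [Nat.prod_primeFactors_of_squarefree hsq] at key
        have h2 : f.totient = ∏ p ∈ f.primeFactors, (p - 1) :=
          Nat.eq_of_mul_eq_mul_right hf (by rw [key, Nat.mul_comm])
        rw [h2]
        push_cast
        refine Finset.prod_congr rfl fun p hp => ?_
        rw [Nat.cast_sub (Nat.prime_of_mem_primeFactors hp).one_lt.le, Nat.cast_one]
      have hφdf : ((d * f).totient : ℚ) = (d.totient : ℚ) * (f.totient : ℚ) := by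
        exact_mod_cast congrArg (fun x : ℕ => (x : ℚ)) (Nat.totient_mul hco)
      rw [hHf, hμ, hφdf, hφf, mul_one, Finset.prod_div_distrib, Finset.prod_const_one,
        div_mul_div_comm, mul_one]
    · have hμ : μ f = 0 := ArithmeticFunction.moebius_eq_zero_of_not_squarefree hsq
      have hH0 : Har d f = 0 := by
        rw [(Har_mult d).multiplicative_factorization _ hf.ne', Finsupp.prod]
        obtain ⟨p, hp2⟩ : ∃ p, 2 ≤ f.factorization p := by
          by_contra h
          push_neg at h
          exact hsq (Nat.squarefree_of_factorization_le_one hf.ne' fun p => by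
            have := h p; omega)
        have hpp : p.Prime := by
          by_contra hpp
          rw [Nat.factorization_eq_zero_of_not_prime f hpp] at hp2; omega
        have hps : p ∈ f.factorization.support := Finsupp.mem_support_iff.mpr (by omega)
        refine Finset.prod_eq_zero hps ?_
        rw [Har_prime_pow hd hpp (by omega), if_neg (by rintro ⟨h, -⟩; omega)]
      rw [hH0, hμ, mul_zero]
      norm_num
  · rw [if_neg hco]
    obtain ⟨p, hpp, hpg⟩ := Nat.exists_prime_and_dvd hco
    have hpd : p ∣ d := hpg.trans (Nat.gcd_dvd_left d f)
    have hpf : p ∣ f := hpg.trans (Nat.gcd_dvd_right d f)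
    have hH0 : Har d f = 0 := by
      rw [(Har_mult d).multiplicative_factorization _ hf.ne', Finsupp.prod]
      have hps : p ∈ f.factorization.support :=
        Finsupp.mem_support_iff.mpr (hpp.factorization_pos_of_dvd hf.ne' hpf).ne'
      refine Finset.prod_eq_zero hps ?_
      rw [Har_prime_pow hd hpp (Finsupp.mem_support_iff.mp hps),
        if_neg (by rintro ⟨-, h⟩; exact h hpd)]
    rw [hH0, mul_zero]
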